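/- Let X_1,...,X_n be i.i.d. over a finite alphabet and w a non-overlapping word of length m with 2m ≤ n+2. Let N_w = Σ_{i=1}^{n-m+1} 1[X_i^{i+m-1} = w]. Then E(N_w^2) = (n-m+1)P(w) + (n-2m+2)(n-2m+1)P(w)^2, and consequently Var(N_w) = E(N_w) + (n-2m+2)(n-2m+1)P(w)^2 - E(N_w)^2. -/
import Mathlib

def occursAt {α : Type*} (w x : List α) (i : ℕ) : Prop :=
  i + w.length ≤ x.length ∧ (x.drop i).take w.length = w

def NonOverlappingPair {α : Type*} (w1 w2 : List α) : Prop :=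
  ¬ ∃ (x : List α) (i j : ℕ), x.length < w1.length + w2.length ∧
      occursAt w1 x i ∧ occursAt w2 x j ∧ (w1 ≠ w2 ∨ i ≠ j)

def NonOverlapping {α : Type*} (w : List α) : Prop := NonOverlappingPair w w

/-- counting helper: number of `j < K` with `j + m ≤ c`. -/
lemma aux_line (m c : ℕ) : ∀ K, (∑ j ∈ Finset.range K, (if j + m ≤ c then 1 else 0 : ℕ))
    = min K (c + 1 - m) := by
  intro K
  induction K with
  | zero => simp
  | succ K ih => rw [Finset.sum_range_succ, ih]; split <;> omega

/-- counting the far-apart ordered pairs. -/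
lemma aux_count (m : ℕ) (hm : 1 ≤ m) : ∀ K,
    (∑ i ∈ Finset.range K, ∑ j ∈ Finset.range K,
      (if i + m ≤ j ∨ j + m ≤ i then 1 else 0 : ℕ)) = (K - m) * (K + 1 - m) := by
  intro K
  induction K with
  | zero => simp
  | succ K ih =>
    rw [Finset.sum_range_succ]
    have hrow : ∀ i ∈ Finset.range K, (∑ j ∈ Finset.range (K+1),
        (if i + m ≤ j ∨ j + m ≤ i then 1 else 0 : ℕ))
        = (∑ j ∈ Finset.range K, (if i + m ≤ j ∨ j + m ≤ i then 1 else 0 : ℕ))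
          + (if i + m ≤ K then 1 else 0) := by
      intro i hi
      rw [Finset.sum_range_succ]
      congr 1
      simp only [Finset.mem_range] at hi
      split <;> split <;> omega
    rw [Finset.sum_congr rfl hrow, Finset.sum_add_distrib, ih]
    have hlast : (∑ j ∈ Finset.range (K+1), (if K + m ≤ j ∨ j + m ≤ K then 1 else 0 : ℕ))
        = (∑ j ∈ Finset.range (K+1), (if j + m ≤ K then 1 else 0 : ℕ)) := by
      apply Finset.sum_congr rfl
      intro j hj
      simp only [Finset.mem_range] at hj
      split <;> split <;> omega
    rw [hlast, aux_line, aux_line]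
    rcases le_or_gt m K with h | h
    · obtain ⟨a, rfl⟩ : ∃ a, K = m + a := ⟨K - m, by omega⟩
      have e1 : m + a - m = a := by omega
      have e2 : m + a + 1 - m = a + 1 := by omega
      have e3 : m + a + 1 + 1 - m = a + 2 := by omega
      have e4 : min (m + a) (m + a + 1 - m) = a + 1 := by omega
      have e5 : min (m + a + 1) (m + a + 1 - m) = a + 1 := by omega
      rw [e1, e3, e4, e5, e2]
      ring
    · have e1 : K + 1 - m = 0 := by omega
      have e2 : K - m = 0 := by omega
      have e3 : K + 1 + 1 - m = K + 2 - m := by omega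
      simp [e1, e2]

open Finset in
/-- expectation of an indicator that prescribes values on a finset of coordinates. -/
lemma keyExp {A : Type*} [Fintype A] [DecidableEq A] (p : A → ℝ) (hp1 : ∑ a, p a = 1)
    {n : ℕ} (S : Finset (Fin n)) (v : Fin n → A) :
    ∑ x : Fin n → A, (∏ i, p (x i)) * (if ∀ i ∈ S, x i = v i then 1 else 0)
      = ∏ i ∈ S, p (v i) := by
  set f : Fin n → A → ℝ := fun i a => if i ∈ S then (if a = v i then p a else 0) else p a
    with hf
  have h1 : ∀ x : Fin n → A, (∏ i, p (x i)) * (if ∀ i ∈ S, x i = v i then (1:ℝ) else 0)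
      = ∏ i, f i (x i) := by
    intro x
    by_cases h : ∀ i ∈ S, x i = v i
    · rw [if_pos h, mul_one]
      refine Finset.prod_congr rfl fun i _ => ?_
      simp only [hf]
      by_cases hi : i ∈ S
      · rw [if_pos hi, if_pos (h i hi)]
      · rw [if_neg hi]
    · rw [if_neg h, mul_zero]
      push_neg at h
      obtain ⟨i, hi, hne⟩ := h
      refine (Finset.prod_eq_zero (Finset.mem_univ i) ?_).symm
      simp only [hf]
      rw [if_pos hi, if_neg hne]
  rw [Finset.sum_congr rfl fun x _ => h1 x, ← Fintype.prod_sum f]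
  have h2 : ∀ i : Fin n, (∑ a, f i a) = (if i ∈ S then p (v i) else 1) := by
    intro i
    simp only [hf]
    by_cases hi : i ∈ S <;> simp [hi, hp1]
  rw [Finset.prod_congr rfl fun i _ => h2 i, Fintype.prod_ite_mem]

open Finset in
/-- expectation of an indicator prescribing values along an injective family of coordinates. -/
lemma keyExp2 {A : Type*} [Fintype A] [DecidableEq A] (p : A → ℝ) (hp1 : ∑ a, p a = 1)
    {n : ℕ} {ι : Type*} [Fintype ι] [Nonempty ι] [DecidableEq ι]
    (e : ι → Fin n) (he : Function.Injective e) (u : ι → A)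
    (D : ∀ x : Fin n → A, Decidable (∀ j, x (e j) = u j)) :
    (∑ x : Fin n → A, (∏ k, p (x k)) * (@ite ℝ (∀ j, x (e j) = u j) (D x) 1 0))
      = ∏ j, p (u j) := by
  classical
  set v : Fin n → A := u ∘ Function.invFun e with hv_def
  have hv : ∀ j, v (e j) = u j := fun j => by
    simp [hv_def, Function.leftInverse_invFun he j]
  have hiff : ∀ x : Fin n → A, (∀ j, x (e j) = u j)
      ↔ (∀ k ∈ Finset.image e Finset.univ, x k = v k) := by
    intro x
    constructor
    · rintro h k hk
      obtain ⟨j, -, rfl⟩ := Finset.mem_image.mp hk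
      rw [h j, hv j]
    · intro h j
      rw [← hv j]
      exact h _ (Finset.mem_image_of_mem _ (Finset.mem_univ _))
  calc ∑ x : Fin n → A, (∏ k, p (x k)) * (@ite ℝ (∀ j, x (e j) = u j) (D x) 1 0)
      = ∑ x : Fin n → A, (∏ k, p (x k)) *
          (if ∀ k ∈ Finset.image e Finset.univ, x k = v k then 1 else 0) :=
        Finset.sum_congr rfl fun x _ => by rw [if_congr (hiff x) rfl rfl]
    _ = ∏ k ∈ Finset.image e Finset.univ, p (v k) := keyExp p hp1 _ _
    _ = ∏ j, p (u j) := by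
        rw [Finset.prod_image (fun a _ b _ h => he h)]
        exact Finset.prod_congr rfl fun j _ => by rw [hv j]

/-- two overlapping occurrences of a non-overlapping word are impossible. -/
lemma aux_overlap {A : Type*} {m : ℕ} (w : Fin m → A) (hw : NonOverlapping (List.ofFn w))
    (i j : ℕ) (hij : i < j) (hover : j < i + m) (y : ℕ → A)
    (h1 : ∀ t : Fin m, y (i + t) = w t) (h2 : ∀ t : Fin m, y (j + t) = w t) : False := by
  apply hw
  refine ⟨List.ofFn (fun t : Fin (j - i + m) => y (i + t)), 0, j - i, ?_, ⟨?_, ?_⟩, ⟨?_, ?_⟩,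
    Or.inr (by omega)⟩
  · simp only [List.length_ofFn]; omega
  · simp only [List.length_ofFn]; omega
  · apply List.ext_getElem (by simp)
    intro t ht1 ht2
    simp only [List.length_take, List.length_drop, List.length_ofFn] at ht1 ht2
    rw [List.getElem_take, List.getElem_drop, List.getElem_ofFn, List.getElem_ofFn]
    have := h1 ⟨t, ht2⟩
    convert this using 2
    simp
  · simp only [List.length_ofFn]; omega
  · apply List.ext_getElem (by simp only [List.length_take, List.length_drop, List.length_ofFn]; omega)
    intro t ht1 ht2
    simp only [List.length_take, List.length_drop, List.length_ofFn] at ht1 ht2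
    rw [List.getElem_take, List.getElem_drop, List.getElem_ofFn, List.getElem_ofFn]
    have := h2 ⟨t, ht2⟩
    convert this using 2
    simp; omega

theorem stmt9 {A : Type*} [Fintype A] [DecidableEq A]
    (p : A → ℝ) (hp : ∀ a, 0 ≤ p a) (hp1 : ∑ a, p a = 1)
    (n m : ℕ) (hm : 1 ≤ m) (hmn : m ≤ n) (h2m : 2 * m ≤ n + 2)
    (w : Fin m → A) (hw : NonOverlapping (List.ofFn w))
    (N : (Fin n → A) → ℝ)
    (hN : ∀ x, N x = ∑ i : Fin (n - m + 1),
        if ∀ j : Fin m, x ⟨i.val + j.val, by have := i.isLt; have := j.isLt; omega⟩ = w j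
        then (1 : ℝ) else 0)
    (Pw : ℝ) (hPw : Pw = ∏ j, p (w j)) :
    (∑ x : Fin n → A, (∏ i, p (x i)) * (N x) ^ 2
        = ((n - m + 1 : ℕ) : ℝ) * Pw +
            ((n + 2 - 2 * m : ℕ) : ℝ) * ((n + 1 - 2 * m : ℕ) : ℝ) * Pw ^ 2) ∧
    ((∑ x : Fin n → A, (∏ i, p (x i)) * (N x) ^ 2)
        - (∑ x : Fin n → A, (∏ i, p (x i)) * N x) ^ 2
      = (∑ x : Fin n → A, (∏ i, p (x i)) * N x)
          + ((n + 2 - 2 * m : ℕ) : ℝ) * ((n + 1 - 2 * m : ℕ) : ℝ) * Pw ^ 2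
          - (∑ x : Fin n → A, (∏ i, p (x i)) * N x) ^ 2) := by
  have hNeFm : Nonempty (Fin m) := ⟨⟨0, hm⟩⟩
  set K := n - m + 1 with hKdef
  have hwin : ∀ (i : Fin K) (j : Fin m), i.val + j.val < n := fun i j => by
    have := i.isLt; have := j.isLt; omega
  set e : Fin K → Fin m → Fin n := fun i j => ⟨i.val + j.val, hwin i j⟩ with he_def
  set ind : Fin K → (Fin n → A) → ℝ :=
    fun i x => if ∀ j : Fin m, x (e i j) = w j then 1 else 0 with hind_def
  have hNind : ∀ x, N x = ∑ i : Fin K, ind i x := by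
    intro x
    rw [hN x]
  have hinj : ∀ i : Fin K, Function.Injective (e i) := by
    intro i a b hab
    have h' : i.val + a.val = i.val + b.val := congrArg Fin.val hab
    exact Fin.ext (by omega)
  -- single-window expectation
  have hE1 : ∀ i : Fin K,
      (∑ x : Fin n → A, (∏ k, p (x k)) * ind i x) = Pw := by
    intro i
    rw [hPw]
    simp only [hind_def]
    exact keyExp2 p hp1 (e i) (hinj i) w _
  -- double-window expectation for far-apart windows
  have hE2 : ∀ i j : Fin K, i.val + m ≤ j.val →
      (∑ x : Fin n → A, (∏ k, p (x k)) * (ind i x * ind j x)) = Pw ^ 2 := by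
    intro i j hfar
    set E : Fin m ⊕ Fin m → Fin n := Sum.elim (e i) (e j) with hE_def
    have hinjE : Function.Injective E := by
      rintro (a | a) (b | b) hab
      · exact congrArg Sum.inl (hinj i hab)
      · exfalso
        have h' : i.val + a.val = j.val + b.val := congrArg Fin.val hab
        have ha := a.isLt; have hb := b.isLt
        omega
      · exfalso
        have h' : j.val + a.val = i.val + b.val := congrArg Fin.val hab
        have ha := a.isLt; have hb := b.isLt
        omega
      · exact congrArg Sum.inr (hinj j hab)
    have hterm : ∀ x : Fin n → A, ind i x * ind j x
        = if ∀ k, x (E k) = Sum.elim w w k then 1 else 0 := by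
      intro x
      simp only [hind_def]
      have hcond : (∀ k, x (E k) = Sum.elim w w k) ↔
          ((∀ t : Fin m, x (e i t) = w t) ∧ (∀ t : Fin m, x (e j t) = w t)) := by
        constructor
        · intro h
          exact ⟨fun t => h (Sum.inl t), fun t => h (Sum.inr t)⟩
        · rintro ⟨h1, h2⟩ (a | b)
          · exact h1 a
          · exact h2 b
      rw [if_congr hcond rfl rfl]
      by_cases h1 : ∀ t : Fin m, x (e i t) = w t <;>
        by_cases h2 : ∀ t : Fin m, x (e j t) = w t <;>
        simp [h1, h2]
    calc (∑ x : Fin n → A, (∏ k, p (x k)) * (ind i x * ind j x))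
        = ∑ x : Fin n → A, (∏ k, p (x k)) *
            (if ∀ k, x (E k) = Sum.elim w w k then 1 else 0) :=
          Finset.sum_congr rfl fun x _ => by rw [hterm x]
      _ = ∏ k, p (Sum.elim w w k) := keyExp2 p hp1 E hinjE _ _
      _ = Pw ^ 2 := by rw [Fintype.prod_sum_type]; simp [hPw, sq]
  -- overlapping distinct windows kill the product
  have hE0 : ∀ i j : Fin K, i.val < j.val → j.val < i.val + m →
      ∀ x : Fin n → A, ind i x * ind j x = 0 := by
    intro i j hij hover x
    by_cases h1 : ∀ t : Fin m, x (e i t) = w t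
    · by_cases h2 : ∀ t : Fin m, x (e j t) = w t
      · exfalso
        have hn1 : 1 ≤ n := le_trans hm hmn
        set y : ℕ → A := fun t => if h : t < n then x ⟨t, h⟩ else x ⟨0, by omega⟩ with hy_def
        refine aux_overlap w hw i.val j.val hij hover y (fun t => ?_) (fun t => ?_)
        · have hlt : i.val + t.val < n := hwin i t
          simp only [hy_def, dif_pos hlt]
          exact h1 t
        · have hlt : j.val + t.val < n := hwin j t
          simp only [hy_def, dif_pos hlt]
          exact h2 t
      · simp only [hind_def]
        rw [if_neg h2, mul_zero]
    · simp only [hind_def]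
      rw [if_neg h1, zero_mul]
  -- first moment
  have hEN : (∑ x : Fin n → A, (∏ i, p (x i)) * N x) = (K : ℝ) * Pw := by
    calc (∑ x : Fin n → A, (∏ i, p (x i)) * N x)
        = ∑ x : Fin n → A, ∑ i : Fin K, (∏ k, p (x k)) * ind i x := by
          refine Finset.sum_congr rfl fun x _ => ?_
          rw [hNind x, Finset.mul_sum]
      _ = ∑ i : Fin K, ∑ x : Fin n → A, (∏ k, p (x k)) * ind i x := Finset.sum_comm
      _ = ∑ _i : Fin K, Pw := Finset.sum_congr rfl fun i _ => hE1 i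
      _ = (K : ℝ) * Pw := by simp [mul_comm]
  -- per-pair expectations
  have hT : ∀ i j : Fin K,
      (∑ x : Fin n → A, (∏ k, p (x k)) * (ind i x * ind j x))
      = if i = j then Pw
        else if i.val + m ≤ j.val ∨ j.val + m ≤ i.val then Pw ^ 2 else 0 := by
    intro i j
    rcases eq_or_ne i j with rfl | hne
    · rw [if_pos rfl]
      have hii : ∀ x : Fin n → A, ind i x * ind i x = ind i x := by
        intro x; simp only [hind_def]; split <;> ring
      rw [Finset.sum_congr rfl fun x _ => by rw [hii x]]
      exact hE1 i
    · rw [if_neg hne]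
      have hvne : i.val ≠ j.val := fun h => hne (Fin.ext h)
      rcases lt_or_gt_of_ne hvne with hlt | hgt
      · by_cases hfar : i.val + m ≤ j.val
        · rw [if_pos (Or.inl hfar)]; exact hE2 i j hfar
        · rw [if_neg (by omega)]
          rw [Finset.sum_congr rfl fun x _ => by
            rw [hE0 i j hlt (by omega) x, mul_zero]]
          simp
      · by_cases hfar : j.val + m ≤ i.val
        · rw [if_pos (Or.inr hfar)]
          rw [Finset.sum_congr rfl fun x _ => by rw [mul_comm (ind i x) (ind j x)]]
          exact hE2 j i hfar
        · rw [if_neg (by omega)]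
          rw [Finset.sum_congr rfl fun x _ => by
            rw [mul_comm (ind i x) (ind j x), hE0 j i hgt (by omega) x, mul_zero]]
          simp
  -- expand the square
  have hsq : (∑ x : Fin n → A, (∏ i, p (x i)) * (N x) ^ 2)
      = ∑ i : Fin K, ∑ j : Fin K,
          (∑ x : Fin n → A, (∏ k, p (x k)) * (ind i x * ind j x)) := by
    calc (∑ x : Fin n → A, (∏ i, p (x i)) * (N x) ^ 2)
        = ∑ x : Fin n → A, ∑ i : Fin K, ∑ j : Fin K,
            (∏ k, p (x k)) * (ind i x * ind j x) := by
          refine Finset.sum_congr rfl fun x _ => ?_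
          rw [hNind x, sq, Finset.sum_mul_sum, Finset.mul_sum]
          refine Finset.sum_congr rfl fun i _ => ?_
          rw [Finset.mul_sum]
      _ = ∑ i : Fin K, ∑ x : Fin n → A, ∑ j : Fin K,
            (∏ k, p (x k)) * (ind i x * ind j x) := Finset.sum_comm
      _ = ∑ i : Fin K, ∑ j : Fin K, ∑ x : Fin n → A,
            (∏ k, p (x k)) * (ind i x * ind j x) :=
          Finset.sum_congr rfl fun i _ => Finset.sum_comm
  -- the counting step
  have hcount : (∑ i : Fin K, ∑ j : Fin K,
      (if i.val + m ≤ j.val ∨ j.val + m ≤ i.val then (1:ℝ) else 0))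
      = ((n + 1 - 2 * m : ℕ) : ℝ) * ((n + 2 - 2 * m : ℕ) : ℝ) := by
    have step1 : (∑ i : Fin K, ∑ j : Fin K,
        (if i.val + m ≤ j.val ∨ j.val + m ≤ i.val then (1:ℝ) else 0))
        = ∑ a ∈ Finset.range K, ∑ b ∈ Finset.range K,
            (if a + m ≤ b ∨ b + m ≤ a then (1:ℝ) else 0) := by
      calc (∑ i : Fin K, ∑ j : Fin K,
          (if i.val + m ≤ j.val ∨ j.val + m ≤ i.val then (1:ℝ) else 0))
          = ∑ i : Fin K, ∑ b ∈ Finset.range K,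
              (if i.val + m ≤ b ∨ b + m ≤ i.val then (1:ℝ) else 0) :=
            Finset.sum_congr rfl fun i _ => Fin.sum_univ_eq_sum_range
              (fun b => if i.val + m ≤ b ∨ b + m ≤ i.val then (1:ℝ) else 0) K
        _ = ∑ a ∈ Finset.range K, ∑ b ∈ Finset.range K,
              (if a + m ≤ b ∨ b + m ≤ a then (1:ℝ) else 0) :=
            Fin.sum_univ_eq_sum_range (fun a => ∑ b ∈ Finset.range K,
              (if a + m ≤ b ∨ b + m ≤ a then (1:ℝ) else 0)) K
    have step2 : ∑ a ∈ Finset.range K, ∑ b ∈ Finset.range K,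
        (if a + m ≤ b ∨ b + m ≤ a then (1:ℝ) else 0)
        = ((∑ a ∈ Finset.range K, ∑ b ∈ Finset.range K,
            (if a + m ≤ b ∨ b + m ≤ a then 1 else 0 : ℕ) : ℕ) : ℝ) := by
      push_cast
      rfl
    rw [step1, step2, aux_count m hm K]
    have e1 : K - m = n + 1 - 2 * m := by omega
    have e2 : K + 1 - m = n + 2 - 2 * m := by omega
    rw [e1, e2]
    push_cast
    ring
  -- second moment
  have h2nd : (∑ x : Fin n → A, (∏ i, p (x i)) * (N x) ^ 2)
      = ((n - m + 1 : ℕ) : ℝ) * Pw +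
          ((n + 2 - 2 * m : ℕ) : ℝ) * ((n + 1 - 2 * m : ℕ) : ℝ) * Pw ^ 2 := by
    rw [hsq, Finset.sum_congr rfl fun i _ => Finset.sum_congr rfl fun j _ => hT i j]
    have hsplit : ∀ i j : Fin K,
        (if i = j then Pw
          else if i.val + m ≤ j.val ∨ j.val + m ≤ i.val then Pw ^ 2 else 0)
        = (if i = j then Pw else 0)
          + Pw ^ 2 * (if i.val + m ≤ j.val ∨ j.val + m ≤ i.val then (1:ℝ) else 0) := by
      intro i j
      rcases eq_or_ne i j with rfl | hne
      · rw [if_pos rfl, if_pos rfl, if_neg (by omega)]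
        ring
      · rw [if_neg hne, if_neg hne]
        split <;> ring
    rw [Finset.sum_congr rfl fun i _ => Finset.sum_congr rfl fun j _ => hsplit i j]
    simp only [Finset.sum_add_distrib, ← Finset.mul_sum]
    rw [hcount]
    have hdiag : (∑ i : Fin K, ∑ j : Fin K, (if i = j then Pw else 0)) = (K : ℝ) * Pw := by
      simp [Finset.sum_ite_eq, mul_comm]
    rw [hdiag]
    ring
  refine ⟨h2nd, ?_⟩
  rw [h2nd, hEN]
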